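/- Let ρ be a density operator on H = ⊗_a H_a and N a neighborhood structure. Then every element σ of the joining set M_N(ρ) satisfies rank(σ) ≤ dim H_N(ρ), where H_N(ρ) is the DQLS subspace of ρ relative to N. -/

import Mathlib

open Matrix ComplexOrder

variable {A : Type*} [Fintype A] [DecidableEq A]
variable {ι : A → Type*} [∀ a, Fintype (ι a)] [∀ a, DecidableEq (ι a)]

/-- Combine an assignment on a neighborhood `S` with one on its complement. -/
def glue (S : Finset A) (f : ∀ a : {a // a ∈ S}, ι a) (g : ∀ a : {a // a ∉ S}, ι a) :
    ∀ a, ι a := fun a => if h : a ∈ S then f ⟨a, h⟩ else g ⟨a, h⟩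

/-- The reduced density matrix of `ρ` on the neighborhood `S` (partial trace over `Sᶜ`). -/
noncomputable def rdm (S : Finset A) (ρ : Matrix (∀ a, ι a) (∀ a, ι a) ℂ) :
    Matrix (∀ a : {a // a ∈ S}, ι a) (∀ a : {a // a ∈ S}, ι a) ℂ :=
  fun f f' => ∑ g : ∀ a : {a // a ∉ S}, ι a, ρ (glue S f g) (glue S f' g)

/-- Embed an operator on the neighborhood `S` as `M ⊗ I_{Sᶜ}` on the full space. -/
noncomputable def liftN (S : Finset A)
    (M : Matrix (∀ a : {a // a ∈ S}, ι a) (∀ a : {a // a ∈ S}, ι a) ℂ) :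
    Matrix (∀ a, ι a) (∀ a, ι a) ℂ :=
  fun i j =>
    if ∀ a : {a // a ∉ S}, i a.1 = j a.1 then
      M (fun a => i a.1) (fun a => j a.1) else 0

set_option linter.unusedSectionVars false
set_option linter.unusedVariables false


/-- Helper: a sum of matrices applied to a vector. -/
lemma sum_mulVec' {β n m : Type*} [Fintype n] (s : Finset β)
    (M : β → Matrix m n ℂ) (x : n → ℂ) :
    (∑ b ∈ s, M b) *ᵥ x = ∑ b ∈ s, M b *ᵥ x := by
  ext i
  simp [Matrix.mulVec, dotProduct, Matrix.sum_apply, Finset.sum_mul]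
  rw [Finset.sum_comm]

lemma mulVec_sum' {β n m : Type*} [Fintype n] (s : Finset β)
    (σ : Matrix m n ℂ) (w : β → n → ℂ) :
    σ *ᵥ (∑ b ∈ s, w b) = ∑ b ∈ s, σ *ᵥ w b := by
  ext i
  simp [Matrix.mulVec, dotProduct, Finset.sum_apply, Finset.mul_sum]
  rw [Finset.sum_comm]

lemma dotProduct_sum' {β n : Type*} [Fintype n] (s : Finset β)
    (v : n → ℂ) (w : β → n → ℂ) :
    v ⬝ᵥ (∑ b ∈ s, w b) = ∑ b ∈ s, v ⬝ᵥ w b := by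
  simp [dotProduct, Finset.mul_sum, Finset.sum_apply]
  rw [Finset.sum_comm]

section Glue

variable (S : Finset A)

@[simp] lemma glue_mem (f : ∀ a : {a // a ∈ S}, ι a) (g : ∀ a : {a // a ∉ S}, ι a)
    (a : {a // a ∈ S}) : glue S f g a.1 = f a := by
  simp only [glue, a.2, dif_pos]

@[simp] lemma glue_not_mem (f : ∀ a : {a // a ∈ S}, ι a) (g : ∀ a : {a // a ∉ S}, ι a)
    (a : {a // a ∉ S}) : glue S f g a.1 = g a := by
  simp only [glue, a.2, dif_neg, not_false_iff]

lemma glue_eta (i : ∀ a, ι a) :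
    glue S (fun a : {a // a ∈ S} => i a.1) (fun a : {a // a ∉ S} => i a.1) = i := by
  funext a
  unfold glue
  split <;> rfl

lemma glue_eq_iff (f : ∀ a : {a // a ∈ S}, ι a) (g : ∀ a : {a // a ∉ S}, ι a) (i : ∀ a, ι a) :
    i = glue S f g ↔ ((fun a : {a // a ∈ S} => i a.1) = f ∧
      (fun a : {a // a ∉ S} => i a.1) = g) := by
  constructor
  · rintro rfl
    exact ⟨funext fun a => glue_mem S f g a, funext fun a => glue_not_mem S f g a⟩
  · rintro ⟨h1, h2⟩
    rw [← h1, ← h2, glue_eta]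

/-- `Zmat S g h` maps `x` to the vector `i ↦ [i|Sᶜ = h] * x (glue (i|S) g)`. -/
noncomputable def Zmat (g h : ∀ a : {a // a ∉ S}, ι a) :
    Matrix (∀ a, ι a) (∀ a, ι a) ℂ :=
  fun i j => if ((fun a : {a // a ∉ S} => i a.1) = h ∧
      j = glue S (fun a : {a // a ∈ S} => i a.1) g) then 1 else 0

lemma Zmat_sum :
    ∑ g : ∀ a : {a // a ∉ S}, ι a, Zmat S g g = (1 : Matrix (∀ a, ι a) (∀ a, ι a) ℂ) := by
  ext i j
  simp only [Finset.sum_apply, Matrix.sum_apply, Zmat, ite_and]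
  rw [Finset.sum_ite_eq (Finset.univ) (fun a : {a // a ∉ S} => i a.1)]
  simp [glue_eta, one_apply, eq_comm]

lemma Zmat_apply' (g h : ∀ a : {a // a ∉ S}, ι a) (k i : ∀ a, ι a) :
    Zmat S g h k i = if (k = glue S (fun a : {a // a ∈ S} => i a.1) h ∧
      (fun a : {a // a ∉ S} => i a.1) = g) then 1 else 0 := by
  unfold Zmat
  refine if_congr ?_ rfl rfl
  rw [glue_eq_iff, glue_eq_iff]
  constructor
  · rintro ⟨h1, h2, h3⟩
    exact ⟨⟨h2.symm, h1⟩, h3⟩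
  · rintro ⟨⟨h1, h2⟩, h3⟩
    exact ⟨h2, h1.symm, h3⟩

lemma lift_eq (σ : Matrix (∀ a, ι a) (∀ a, ι a) ℂ) :
    liftN S (rdm S σ) = ∑ g : ∀ a : {a // a ∉ S}, ι a, ∑ h : ∀ a : {a // a ∉ S}, ι a,
      (Zmat S g h)ᴴ * σ * (Zmat S g h) := by
  ext i j
  simp only [Matrix.sum_apply, Matrix.mul_apply, conjTranspose_apply, Zmat_apply',
    apply_ite (starRingEnd ℂ), apply_ite (star : ℂ → ℂ), star_one, star_zero,
    _root_.map_one, _root_.map_zero,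
    ite_mul, one_mul, zero_mul, mul_ite, mul_one, mul_zero,
    ite_and, Finset.sum_ite_eq', Finset.sum_ite_eq, Finset.mem_univ, if_true,
    Finset.sum_ite_irrel, Finset.sum_const_zero]
  rw [liftN]
  exact if_congr funext_iff.symm rfl rfl

/-- The lift of the RDM of a PSD matrix is PSD. -/
lemma lift_posSemidef {σ : Matrix (∀ a, ι a) (∀ a, ι a) ℂ} (hσ : σ.PosSemidef) :
    (liftN S (rdm S σ)).PosSemidef := by
  rw [lift_eq]
  exact Finset.sum_induction _ _ (fun a b ha hb => ha.add hb) Matrix.PosSemidef.zero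
    (fun g _ => Finset.sum_induction _ _ (fun a b ha hb => ha.add hb) Matrix.PosSemidef.zero
      (fun h _ => hσ.conjTranspose_mul_mul_same _))

/-- Kernel of the lifted RDM is contained in the kernel of σ. -/
lemma ker_lift {σ : Matrix (∀ a, ι a) (∀ a, ι a) ℂ} (hσ : σ.PosSemidef)
    (x : (∀ a, ι a) → ℂ) (hx : liftN S (rdm S σ) *ᵥ x = 0) : σ *ᵥ x = 0 := by
  have h0 : ∑ g : ∀ a : {a // a ∉ S}, ι a, ∑ h : ∀ a : {a // a ∉ S}, ι a,
      star x ⬝ᵥ ((Zmat S g h)ᴴ * σ * Zmat S g h) *ᵥ x = 0 := by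
    have h1 := congrArg (fun v => star x ⬝ᵥ v) hx
    simp only [dotProduct_zero] at h1
    rw [lift_eq] at h1
    rw [← h1, sum_mulVec', dotProduct_sum']
    exact Finset.sum_congr rfl fun g _ => by rw [sum_mulVec', dotProduct_sum']
  have hnn : ∀ (g h : ∀ a : {a // a ∉ S}, ι a),
      0 ≤ star x ⬝ᵥ ((Zmat S g h)ᴴ * σ * Zmat S g h) *ᵥ x :=
    fun g h => (hσ.conjTranspose_mul_mul_same (Zmat S g h)).dotProduct_mulVec_nonneg x
  have hz : ∀ (g h : ∀ a : {a // a ∉ S}, ι a),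
      star x ⬝ᵥ ((Zmat S g h)ᴴ * σ * Zmat S g h) *ᵥ x = 0 := by
    intro g h
    have houter := (Finset.sum_eq_zero_iff_of_nonneg
      (fun g _ => Finset.sum_nonneg fun h _ => hnn g h)).mp h0 g (Finset.mem_univ g)
    exact (Finset.sum_eq_zero_iff_of_nonneg (fun h _ => hnn g h)).mp houter h (Finset.mem_univ h)
  have hzz : ∀ g : ∀ a : {a // a ∉ S}, ι a, σ *ᵥ (Zmat S g g *ᵥ x) = 0 := by
    intro g
    have h2 := hz g g
    rw [← Matrix.mulVec_mulVec, ← Matrix.mulVec_mulVec, dotProduct_mulVec,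
      ← Matrix.star_mulVec] at h2
    exact (hσ.dotProduct_mulVec_zero_iff _).mp h2
  have hxsum : x = ∑ g : ∀ a : {a // a ∉ S}, ι a, Zmat S g g *ᵥ x := by
    rw [← sum_mulVec', Zmat_sum, Matrix.one_mulVec]
  calc σ *ᵥ x = σ *ᵥ ∑ g : ∀ a : {a // a ∉ S}, ι a, Zmat S g g *ᵥ x := by rw [← hxsum]
    _ = ∑ g : ∀ a : {a // a ∉ S}, ι a, σ *ᵥ (Zmat S g g *ᵥ x) := mulVec_sum' _ _ _
    _ = 0 := by simp [hzz]

end Glue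

/-- Hermitian range inclusion from kernel inclusion. -/
theorem range_le_range_of_ker {n : Type*} [Fintype n] [DecidableEq n]
    {M N : Matrix n n ℂ} (hM : M.IsHermitian) (hN : N.IsHermitian)
    (h : ∀ x, N *ᵥ x = 0 → M *ᵥ x = 0) :
    LinearMap.range M.mulVecLin ≤ LinearMap.range N.mulVecLin := by
  classical
  set f := Matrix.toEuclideanLin M with hf
  set g := Matrix.toEuclideanLin N with hg
  have hfs : f.IsSymmetric := Matrix.isHermitian_iff_isSymmetric.mp hM
  have hgs : g.IsSymmetric := Matrix.isHermitian_iff_isSymmetric.mp hN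
  have key : ∀ (L : EuclideanSpace ℂ n →ₗ[ℂ] EuclideanSpace ℂ n), L.IsSymmetric →
      (LinearMap.range L)ᗮ = LinearMap.ker L := by
    intro L hL
    ext x
    simp only [Submodule.mem_orthogonal, LinearMap.mem_ker]
    constructor
    · intro hx
      have h1 : ∀ y, inner (𝕜 := ℂ) y (L x) = 0 := fun y => by
        rw [← hL y x]; exact hx _ ⟨y, rfl⟩
      have := h1 (L x)
      rwa [inner_self_eq_zero] at this
    · rintro hx u ⟨y, rfl⟩
      rw [hL y x, hx, inner_zero_right]
  have hker : LinearMap.ker g ≤ LinearMap.ker f := by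
    intro x hx
    simp only [LinearMap.mem_ker] at hx ⊢
    have hx' : N *ᵥ (WithLp.equiv 2 (n → ℂ) x) = 0 := by
      have := congrArg (WithLp.equiv 2 (n → ℂ)) hx
      simpa [hg, Matrix.toEuclideanLin_apply] using this
    have := h _ hx'
    rw [hf, Matrix.toEuclideanLin_apply]
    change WithLp.toLp 2 (M *ᵥ (WithLp.equiv 2 (n → ℂ)) x) = 0
    rw [this]
    simp
  have hrange : LinearMap.range f ≤ LinearMap.range g := by
    rw [← Submodule.orthogonal_orthogonal (LinearMap.range f),
        ← Submodule.orthogonal_orthogonal (LinearMap.range g)]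
    apply Submodule.orthogonal_le
    rw [key f hfs, key g hgs]
    exact hker
  have hMdec : M.mulVecLin =
      ((WithLp.linearEquiv 2 ℂ (n → ℂ)).toLinearMap.comp f).comp
        (WithLp.linearEquiv 2 ℂ (n → ℂ)).symm.toLinearMap := rfl
  have hNdec : N.mulVecLin =
      ((WithLp.linearEquiv 2 ℂ (n → ℂ)).toLinearMap.comp g).comp
        (WithLp.linearEquiv 2 ℂ (n → ℂ)).symm.toLinearMap := rfl
  rw [hMdec, hNdec, LinearEquiv.range_comp, LinearEquiv.range_comp,
    LinearMap.range_comp, LinearMap.range_comp]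
  exact Submodule.map_mono hrange

/-- every element σ of the joining set of ρ satisfies
rank(σ) ≤ dim H_N(ρ), the dimension of the DQLS subspace of ρ. -/
theorem joining_set_rank_le_dim_DQLS {K : Type*} (Nhd : K → Finset A)
    (ρ : Matrix (∀ a, ι a) (∀ a, ι a) ℂ) (hρ : ρ.PosSemidef) (htr : ρ.trace = 1)
    (σ : Matrix (∀ a, ι a) (∀ a, ι a) ℂ) (hσ : σ.PosSemidef) (hσt : σ.trace = 1)
    (hjoin : ∀ k, rdm (Nhd k) σ = rdm (Nhd k) ρ) :
    σ.rank ≤ Module.finrank ℂ ↥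
      (⨅ k, LinearMap.range (liftN (Nhd k) (rdm (Nhd k) ρ)).mulVecLin) := by
  have key : LinearMap.range σ.mulVecLin ≤
      ⨅ k, LinearMap.range (liftN (Nhd k) (rdm (Nhd k) ρ)).mulVecLin := by
    refine le_iInf fun k => ?_
    rw [← hjoin k]
    exact range_le_range_of_ker hσ.isHermitian (lift_posSemidef _ hσ).isHermitian
      (fun x hx => ker_lift _ hσ x hx)
  exact Submodule.finrank_mono key
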